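/- With Λ as in the ℝ^{(4)} automatic differentiation (Λ(f)(x + a₁ε + a₂ε² + a₃ε³) = f(x) + a₁f'(x)ε + (a₂f' + ½a₁²f'')(x)ε² + (a₃f' + a₁a₂f'' + ⅙a₁³f''')(x)ε³), and for real constants α ≠ 0, β, γ, the composition law holds at Ω(x) = x + αε + βε² + γε³: Λ(f∘g)(Ω(x)) = Λ(f)(Λ(g)(Ω(x))), for f three times differentiable at g(x) and g three times differentiable at x. -/

import Mathlib

open Polynomial

open Filter Topology

lemma contDiffAt_deriv' {h : ℝ → ℝ} {x : ℝ} {n : ℕ} (H : ContDiffAt ℝ (n+1) h x) :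
    ContDiffAt ℝ n (deriv h) x := by
  obtain ⟨u, hu, hcd⟩ := H.contDiffOn le_rfl (by simp)
  rcases mem_nhds_iff.1 hu with ⟨t, htu, hto, hxt⟩
  have := (contDiffOn_succ_iff_deriv_of_isOpen hto).1 (hcd.mono htu)
  exact this.2.2.contDiffAt (hto.mem_nhds hxt)

lemma three_eq : (3 : WithTop ℕ∞) = (2:ℕ) + 1 := by norm_num

lemma chain3 {f g : ℝ → ℝ} {x : ℝ} (hg : ContDiffAt ℝ 3 g x) (hf : ContDiffAt ℝ 3 f (g x)) :
    deriv (f ∘ g) x = deriv f (g x) * deriv g x ∧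
    iteratedDeriv 2 (f ∘ g) x =
      iteratedDeriv 2 f (g x) * (deriv g x)^2 + deriv f (g x) * iteratedDeriv 2 g x ∧
    iteratedDeriv 3 (f ∘ g) x =
      iteratedDeriv 3 f (g x) * (deriv g x)^3 +
        3 * iteratedDeriv 2 f (g x) * deriv g x * iteratedDeriv 2 g x +
        deriv f (g x) * iteratedDeriv 3 g x := by
  have h3 : (3 : WithTop ℕ∞) ≠ ((⊤:ℕ∞) : WithTop ℕ∞) := by norm_num
  have E : ∀ᶠ y in 𝓝 x, ContDiffAt ℝ 3 g y ∧ ContDiffAt ℝ 3 f (g y) :=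
    (hg.eventually h3).and (hg.continuousAt.eventually (hf.eventually h3))
  -- first derivative, eventually
  have h1 : ∀ᶠ y in 𝓝 x, deriv (f ∘ g) y = deriv f (g y) * deriv g y := by
    filter_upwards [E] with y ⟨hgy, hfy⟩
    exact deriv_comp y (hfy.differentiableAt (by norm_num)) (hgy.differentiableAt (by norm_num))
  -- second derivative, eventually
  have h2 : ∀ᶠ y in 𝓝 x, deriv (deriv (f ∘ g)) y =
      iteratedDeriv 2 f (g y) * deriv g y * deriv g y + deriv f (g y) * iteratedDeriv 2 g y := by
    filter_upwards [E, h1.eventually_nhds] with y ⟨hgy, hfy⟩ h1y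
    have hgd : DifferentiableAt ℝ g y := hgy.differentiableAt (by norm_num)
    have hg' : ContDiffAt ℝ 2 (deriv g) y := contDiffAt_deriv' (three_eq ▸ hgy)
    have hf' : ContDiffAt ℝ 2 (deriv f) (g y) := contDiffAt_deriv' (three_eq ▸ hfy)
    have hfg : DifferentiableAt ℝ (fun z => deriv f (g z)) y :=
      (hf'.differentiableAt (by norm_num)).comp y hgd
    rw [Filter.EventuallyEq.deriv_eq h1y, deriv_fun_mul hfg (hg'.differentiableAt (by norm_num))]
    have : deriv (fun z => deriv f (g z)) y = deriv (deriv f) (g y) * deriv g y :=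
      deriv_comp y (hf'.differentiableAt (by norm_num)) hgd
    rw [this, iteratedDeriv_succ, iteratedDeriv_one, iteratedDeriv_succ, iteratedDeriv_one]
  refine ⟨h1.self_of_nhds, ?_, ?_⟩
  · rw [iteratedDeriv_succ, iteratedDeriv_one, h2.self_of_nhds,
      iteratedDeriv_succ, iteratedDeriv_one, iteratedDeriv_succ, iteratedDeriv_one]
    ring
  · -- third derivative
    have hgy := hg
    have hfy := hf
    have hgd : DifferentiableAt ℝ g x := hgy.differentiableAt (by norm_num)
    have hg' : ContDiffAt ℝ 2 (deriv g) x := contDiffAt_deriv' (three_eq ▸ hgy)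
    have hf' : ContDiffAt ℝ 2 (deriv f) (g x) := contDiffAt_deriv' (three_eq ▸ hfy)
    have hg'' : ContDiffAt ℝ 1 (deriv (deriv g)) x :=
      contDiffAt_deriv' (by exact_mod_cast hg')
    have hf'' : ContDiffAt ℝ 1 (deriv (deriv f)) (g x) :=
      contDiffAt_deriv' (by exact_mod_cast hf')
    have dfg : DifferentiableAt ℝ (fun z => deriv f (g z)) x :=
      (hf'.differentiableAt (by norm_num)).comp x hgd
    have dffg : DifferentiableAt ℝ (fun z => deriv (deriv f) (g z)) x :=
      (hf''.differentiableAt (by norm_num)).comp x hgd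
    have dgg : DifferentiableAt ℝ (deriv g) x := hg'.differentiableAt (by norm_num)
    have dggg : DifferentiableAt ℝ (deriv (deriv g)) x := hg''.differentiableAt (by norm_num)
    have e2 : ∀ᶠ y in 𝓝 x, deriv (deriv (f ∘ g)) y =
        deriv (deriv f) (g y) * deriv g y * deriv g y + deriv f (g y) * deriv (deriv g) y := by
      filter_upwards [h2] with y hy
      rw [hy, iteratedDeriv_succ, iteratedDeriv_one, iteratedDeriv_succ, iteratedDeriv_one]
    have key : iteratedDeriv 3 (f ∘ g) x =
        deriv (fun y => deriv (deriv f) (g y) * deriv g y * deriv g y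
          + deriv f (g y) * deriv (deriv g) y) x := by
      rw [show (3:ℕ) = 2 + 1 from rfl, iteratedDeriv_succ]
      have : iteratedDeriv 2 (f ∘ g) = deriv (deriv (f ∘ g)) := by
        rw [iteratedDeriv_succ, iteratedDeriv_one]
      rw [this]
      exact Filter.EventuallyEq.deriv_eq e2
    have c1 : deriv (fun z => deriv (deriv f) (g z)) x
        = deriv (deriv (deriv f)) (g x) * deriv g x :=
      deriv_comp x (hf''.differentiableAt (by norm_num)) hgd
    have c2 : deriv (fun z => deriv f (g z)) x = deriv (deriv f) (g x) * deriv g x :=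
      deriv_comp x (hf'.differentiableAt (by norm_num)) hgd
    rw [key, deriv_fun_add ((dffg.fun_mul dgg).fun_mul dgg) (dfg.fun_mul dggg),
      deriv_fun_mul (dffg.fun_mul dgg) dgg, deriv_fun_mul dffg dgg, deriv_fun_mul dfg dggg, c1, c2]
    simp only [iteratedDeriv_succ, iteratedDeriv_one, iteratedDeriv_zero]
    ring


/-- The truncated polynomial algebra `ℝ[X]/(X⁴)`. -/
noncomputable abbrev R4 : Type := Polynomial ℝ ⧸ Ideal.span {(X : Polynomial ℝ) ^ 4}

/-- `ε`, the image of `X` in `ℝ[X]/(X⁴)`. -/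
noncomputable def eps : R4 := Ideal.Quotient.mk _ (X : Polynomial ℝ)

/-- The embedding of real scalars into `ℝ[X]/(X⁴)`. -/
noncomputable def Cc : ℝ →+* R4 := algebraMap ℝ R4

/-- `Λ(f)(x + a₁ε + a₂ε² + a₃ε³)`, the `ℝ⁽⁴⁾`-extension of a function `f` that is
three times differentiable at `x`. -/
noncomputable def Lam (f : ℝ → ℝ) (x a₁ a₂ a₃ : ℝ) : R4 :=
  Cc (f x) + Cc (a₁ * deriv f x) * eps +
    Cc (a₂ * deriv f x + 1 / 2 * a₁ ^ 2 * iteratedDeriv 2 f x) * eps ^ 2 +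
    Cc (a₃ * deriv f x + a₁ * a₂ * iteratedDeriv 2 f x +
        1 / 6 * a₁ ^ 3 * iteratedDeriv 3 f x) * eps ^ 3

/-- `Λ` preserves composition at `Ω(x) = x + αε + βε² + γε³`:
`Λ(f∘g)(Ω(x)) = Λ(f)(Λ(g)(Ω(x)))`, where `Λ(g)(Ω(x))` has degree-1 coefficient
`αg'(x)`, degree-2 coefficient `βg'(x) + ½α²g''(x)`, and degree-3 coefficient
`γg'(x) + αβg''(x) + ⅙α³g'''(x)`. -/
theorem Lam_comp (f g : ℝ → ℝ) (x α β γ : ℝ) (hα : α ≠ 0)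
    (hg : ContDiffAt ℝ 3 g x) (hf : ContDiffAt ℝ 3 f (g x)) :
    Lam (f ∘ g) x α β γ =
      Lam f (g x) (α * deriv g x)
        (β * deriv g x + 1 / 2 * α ^ 2 * iteratedDeriv 2 g x)
        (γ * deriv g x + α * β * iteratedDeriv 2 g x +
          1 / 6 * α ^ 3 * iteratedDeriv 3 g x) := by
  obtain ⟨d1, d2, d3⟩ := chain3 hg hf
  have k1 : α * deriv (f ∘ g) x = α * deriv g x * deriv f (g x) := by rw [d1]; ring
  have k2 : β * deriv (f ∘ g) x + 1 / 2 * α ^ 2 * iteratedDeriv 2 (f ∘ g) x =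
      (β * deriv g x + 1 / 2 * α ^ 2 * iteratedDeriv 2 g x) * deriv f (g x) +
        1 / 2 * (α * deriv g x) ^ 2 * iteratedDeriv 2 f (g x) := by
    rw [d1, d2]; ring
  have k3 : γ * deriv (f ∘ g) x + α * β * iteratedDeriv 2 (f ∘ g) x +
        1 / 6 * α ^ 3 * iteratedDeriv 3 (f ∘ g) x =
      (γ * deriv g x + α * β * iteratedDeriv 2 g x +
          1 / 6 * α ^ 3 * iteratedDeriv 3 g x) * deriv f (g x) +
        α * deriv g x * (β * deriv g x + 1 / 2 * α ^ 2 * iteratedDeriv 2 g x) *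
          iteratedDeriv 2 f (g x) +
        1 / 6 * (α * deriv g x) ^ 3 * iteratedDeriv 3 f (g x) := by
    rw [d1, d2, d3]; ring
  unfold Lam
  rw [k1, k2, k3]
  rfl
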